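/- Let Y(1), Y(0) be {0,1}-valued random variables, A a {0,1}-valued random variable, and Y = A·Y(1) + (1−A)·Y(0). Then P(Y(1) < Y(0)) ≤ E[Y(0)] − P(Y = 1, A = 0) + (1 − E[Y(1)] − P(Y = 0, A = 1)). -/

import Mathlib

open MeasureTheory

theorem stmt_7 {Ω : Type*} [MeasurableSpace Ω] (μ : Measure Ω) [IsProbabilityMeasure μ]
    (Y1 Y0 A : Ω → ℝ) (hY1m : Measurable Y1) (hY0m : Measurable Y0) (hAm : Measurable A)
    (hY1b : ∀ ω, Y1 ω = 0 ∨ Y1 ω = 1) (hY0b : ∀ ω, Y0 ω = 0 ∨ Y0 ω = 1)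
    (hAb : ∀ ω, A ω = 0 ∨ A ω = 1)
    (Y : Ω → ℝ) (hY : ∀ ω, Y ω = A ω * Y1 ω + (1 - A ω) * Y0 ω) :
    (μ {ω | Y1 ω < Y0 ω}).toReal ≤
      (∫ ω, Y0 ω ∂μ) - (μ {ω | Y ω = 1 ∧ A ω = 0}).toReal
      + (1 - (∫ ω, Y1 ω ∂μ) - (μ {ω | Y ω = 0 ∧ A ω = 1}).toReal) := by
  have m10 : MeasurableSet {ω | Y1 ω = 0} := hY1m (measurableSet_singleton 0)
  have m11 : MeasurableSet {ω | Y1 ω = 1} := hY1m (measurableSet_singleton 1)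
  have m01 : MeasurableSet {ω | Y0 ω = 1} := hY0m (measurableSet_singleton 1)
  have mA0 : MeasurableSet {ω | A ω = 0} := hAm (measurableSet_singleton 0)
  have mA1 : MeasurableSet {ω | A ω = 1} := hAm (measurableSet_singleton 1)
  -- the event sets
  set S01 := {ω | Y1 ω = 0 ∧ Y0 ω = 1} with hS01
  set B1 := {ω | Y0 ω = 1 ∧ A ω = 1} with hB1
  set B0 := {ω | Y1 ω = 0 ∧ A ω = 0} with hB0
  have hset1 : {ω | Y1 ω < Y0 ω} = S01 := by
    ext ω
    rcases hY1b ω with h1 | h1 <;> rcases hY0b ω with h0 | h0 <;>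
      simp [hS01, h1, h0]
  have hsub : S01 ⊆ B1 ∪ B0 := by
    rintro ω ⟨h1, h0⟩
    rcases hAb ω with hA | hA
    · exact Or.inr ⟨h1, hA⟩
    · exact Or.inl ⟨h0, hA⟩
  -- integrals as measures
  have hEY0 : (∫ ω, Y0 ω ∂μ) = (μ {ω | Y0 ω = 1}).toReal := by
    have : Y0 = Set.indicator {ω | Y0 ω = 1} (fun _ => (1 : ℝ)) := by
      funext ω; rcases hY0b ω with h | h <;> simp [Set.indicator, h]
    rw [this]
    conv_rhs => rw [← this]
    exact integral_indicator_one (μ := μ) m01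
  have hEY1 : (∫ ω, Y1 ω ∂μ) = (μ {ω | Y1 ω = 1}).toReal := by
    have : Y1 = Set.indicator {ω | Y1 ω = 1} (fun _ => (1 : ℝ)) := by
      funext ω; rcases hY1b ω with h | h <;> simp [Set.indicator, h]
    rw [this]
    conv_rhs => rw [← this]
    exact integral_indicator_one (μ := μ) m11
  -- rewrite Y-events
  have hsetY1 : {ω | Y ω = 1 ∧ A ω = 0} = {ω | Y0 ω = 1 ∧ A ω = 0} := by
    ext ω
    simp only [Set.mem_setOf_eq, hY ω]
    constructor
    · rintro ⟨h, hA⟩; rw [hA] at h; constructor <;> linarith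
    · rintro ⟨h, hA⟩; rw [hA, h]; norm_num
  have hsetY0 : {ω | Y ω = 0 ∧ A ω = 1} = {ω | Y1 ω = 0 ∧ A ω = 1} := by
    ext ω
    simp only [Set.mem_setOf_eq, hY ω]
    constructor
    · rintro ⟨h, hA⟩; rw [hA] at h; constructor <;> linarith
    · rintro ⟨h, hA⟩; rw [hA, h]; norm_num
  have fin : ∀ s : Set Ω, μ s ≠ ⊤ := fun s => measure_ne_top μ s
  -- total probability splits
  have hone : (μ {ω | Y1 ω = 0}).toReal + (μ {ω | Y1 ω = 1}).toReal = 1 := by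
    have hdisj : Disjoint {ω | Y1 ω = 0} {ω | Y1 ω = 1} := by
      rw [Set.disjoint_left]; rintro ω h0 h1
      simp only [Set.mem_setOf_eq] at h0 h1; rw [h0] at h1; norm_num at h1
    have huniv : {ω | Y1 ω = 0} ∪ {ω | Y1 ω = 1} = Set.univ := by
      ext ω; simpa using hY1b ω
    have := measure_union (μ := μ) hdisj m11
    rw [huniv, measure_univ] at this
    rw [← ENNReal.toReal_add (fin _) (fin _), ← this]
    simp
  have hsplit0 : (μ {ω | Y0 ω = 1}).toReal
      = (μ {ω | Y0 ω = 1 ∧ A ω = 0}).toReal + (μ B1).toReal := by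
    have hdisj : Disjoint {ω | Y0 ω = 1 ∧ A ω = 0} B1 := by
      rw [Set.disjoint_left]; rintro ω ⟨_, h0⟩ ⟨_, h1⟩
      rw [h0] at h1; norm_num at h1
    have hm : MeasurableSet B1 := m01.inter mA1
    have hU : {ω | Y0 ω = 1 ∧ A ω = 0} ∪ B1 = {ω | Y0 ω = 1} := by
      ext ω; simp only [hB1, Set.mem_union, Set.mem_setOf_eq]
      constructor
      · rintro (⟨h, _⟩ | ⟨h, _⟩) <;> exact h
      · intro h; rcases hAb ω with hA | hA
        · exact Or.inl ⟨h, hA⟩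
        · exact Or.inr ⟨h, hA⟩
    rw [← hU, measure_union hdisj hm, ENNReal.toReal_add (fin _) (fin _)]
  have hsplit1 : (μ {ω | Y1 ω = 0}).toReal
      = (μ {ω | Y1 ω = 0 ∧ A ω = 1}).toReal + (μ B0).toReal := by
    have hdisj : Disjoint {ω | Y1 ω = 0 ∧ A ω = 1} B0 := by
      rw [Set.disjoint_left]; rintro ω ⟨_, h1⟩ ⟨_, h0⟩
      rw [h0] at h1; norm_num at h1
    have hm : MeasurableSet B0 := m10.inter mA0
    have hU : {ω | Y1 ω = 0 ∧ A ω = 1} ∪ B0 = {ω | Y1 ω = 0} := by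
      ext ω; simp only [hB0, Set.mem_union, Set.mem_setOf_eq]
      constructor
      · rintro (⟨h, _⟩ | ⟨h, _⟩) <;> exact h
      · intro h; rcases hAb ω with hA | hA
        · exact Or.inr ⟨h, hA⟩
        · exact Or.inl ⟨h, hA⟩
    rw [← hU, measure_union hdisj hm, ENNReal.toReal_add (fin _) (fin _)]
  -- union bound
  have hub : (μ S01).toReal ≤ (μ B1).toReal + (μ B0).toReal := by
    calc (μ S01).toReal ≤ (μ (B1 ∪ B0)).toReal := by
          exact ENNReal.toReal_mono (fin _) (measure_mono hsub)
      _ ≤ (μ B1).toReal + (μ B0).toReal := by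
          rw [← ENNReal.toReal_add (fin _) (fin _)]
          exact ENNReal.toReal_mono (by simp [fin]) (measure_union_le _ _)
  rw [hset1, hEY0, hEY1, hsetY1, hsetY0]
  linarith
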